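/- arXiv:2504.21339 — 5 statements merged into one kernel-verified Lean document; each statement's English description precedes it below -/
import Mathlib

section
/- Let N ≥ 3 be a natural number. Then 1/(16(N-1)) + (1/(12(N-1)))^(N/(N-2)) · (N-2)/(4N) < 1/8 - (N-2)/(8N), where the power is the real power with exponent N/(N-2). -/
theorem key_numerical_inequality (N : ℕ) (hN : 3 ≤ N) :
    1 / (16 * ((N : ℝ) - 1)) +
      (1 / (12 * ((N : ℝ) - 1))) ^ ((N : ℝ) / ((N : ℝ) - 2)) * (((N : ℝ) - 2) / (4 * (N : ℝ)))
      < 1 / 8 - ((N : ℝ) - 2) / (8 * (N : ℝ)) := by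
  have hn : (3:ℝ) ≤ (N:ℝ) := by exact_mod_cast hN
  set n := (N:ℝ) with hdef
  have h1 : (0:ℝ) < n - 1 := by linarith
  have h2 : (0:ℝ) < n - 2 := by linarith
  have hn0 : (0:ℝ) < n := by linarith
  have hx : (0:ℝ) < 1/(12*(n-1)) := by positivity
  have hx1 : 1/(12*(n-1)) ≤ 1 := by
    rw [div_le_one (by positivity)]; linarith
  have he : (1:ℝ) ≤ n/(n-2) := by
    rw [le_div_iff₀ h2]; linarith
  have key : (1/(12*(n-1))) ^ (n/(n-2)) ≤ 1/(12*(n-1)) := by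
    calc (1/(12*(n-1))) ^ (n/(n-2)) ≤ (1/(12*(n-1))) ^ (1:ℝ) :=
          Real.rpow_le_rpow_of_exponent_ge hx hx1 he
      _ = 1/(12*(n-1)) := Real.rpow_one _
  have hpos : (0:ℝ) ≤ (n-2)/(4*n) := by positivity
  have hmul : (1/(12*(n-1))) ^ (n/(n-2)) * ((n-2)/(4*n)) ≤ (1/(12*(n-1))) * ((n-2)/(4*n)) :=
    mul_le_mul_of_nonneg_right key hpos
  have hfin : 1/(16*(n-1)) + (1/(12*(n-1))) * ((n-2)/(4*n)) < 1/8 - (n-2)/(8*n) := by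
    have h1' : (n-1) ≠ 0 := ne_of_gt h1
    have hn' : n ≠ 0 := ne_of_gt hn0
    have key2 : 1/(16*(n-1)) + 1/(12*(n-1)) * ((n-2)/(4*n))
        = (3*n + (n-2)) / (48*n*(n-1)) := by field_simp; ring
    have key3 : (1:ℝ)/8 - (n-2)/(8*n) = 1/(4*n) := by field_simp; ring
    rw [key2, key3, div_lt_div_iff₀ (by positivity) (by positivity)]
    nlinarith [sq_nonneg n, sq_nonneg (n-3), mul_pos hn0 h1, mul_pos (mul_pos hn0 h1) h2]
  linarith
end

section
/- Let N ≥ 3 be a natural number, let p = 2N/(N-2), let A > 0 be a real number, and define Φ(t) = t²/4 - A·t^p and Ψ(t) = 3t²/4 + A·t^p for t ≥ 0. Set t₀ = (1/(2pA))^((N-2)/4) and t₁ = (12(N-1))^(-1/2) · t₀. Then Ψ(t₁) < (1/2)·Φ(t₀). -/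
set_option maxHeartbeats 1000000


theorem mountain_pass_geometry (N : ℕ) (hN : 3 ≤ N) (p A : ℝ)
    (hp : p = 2 * (N : ℝ) / ((N : ℝ) - 2)) (hA : 0 < A)
    (Φ Ψ : ℝ → ℝ)
    (hΦ : ∀ t : ℝ, 0 ≤ t → Φ t = t ^ 2 / 4 - A * t ^ p)
    (hΨ : ∀ t : ℝ, 0 ≤ t → Ψ t = 3 * t ^ 2 / 4 + A * t ^ p)
    (t₀ t₁ : ℝ)
    (ht₀ : t₀ = (1 / (2 * p * A)) ^ (((N : ℝ) - 2) / 4))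
    (ht₁ : t₁ = (12 * ((N : ℝ) - 1)) ^ (-(1 / 2) : ℝ) * t₀) :
    Ψ t₁ < (1 / 2) * Φ t₀ := by
  set n : ℝ := (N : ℝ) with hn
  have hn3 : (3 : ℝ) ≤ n := by rw [hn]; exact_mod_cast hN
  have hn2 : (0 : ℝ) < n - 2 := by linarith
  have hp2 : 2 < p := by
    rw [hp]; rw [lt_div_iff₀ hn2]; nlinarith
  have hp0 : 0 < p := by linarith
  set c : ℝ := 1 / (2 * p * A) with hc
  have hc0 : 0 < c := by positivity
  have ht0pos : 0 < t₀ := by rw [ht₀]; exact Real.rpow_pos_of_pos hc0 _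
  have hexp : (n - 2) / 4 * p = n / 2 := by
    rw [hp]; field_simp; ring
  have ht0p : t₀ ^ p = c ^ ((n : ℝ) / 2) := by
    rw [ht₀, ← Real.rpow_mul hc0.le, hexp]
  have ht0sq : t₀ ^ 2 = c ^ ((n - 2) / 2) := by
    rw [ht₀, ← Real.rpow_natCast (c ^ ((n - 2) / 4)) 2, ← Real.rpow_mul hc0.le]
    norm_num
    congr 1
    ring
  have hsplit : c ^ ((n : ℝ) / 2) = c ^ ((n - 2) / 2) * c := by
    have h : (n : ℝ) / 2 = (n - 2) / 2 + 1 := by ring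
    rw [h, Real.rpow_add hc0, Real.rpow_one]
  have hAc : A * c = 1 / (2 * p) := by
    rw [hc]; field_simp
  have key1 : A * t₀ ^ p = t₀ ^ 2 * (1 / (2 * p)) := by
    rw [ht0p, hsplit, ht0sq, ← hAc]; ring
  have hinv2p : 1 / (2 * p) = (n - 2) / (4 * n) := by
    rw [hp]; rw [div_eq_div_iff (by positivity) (by positivity)]; field_simp; ring
  set x : ℝ := 12 * (n - 1) with hx
  have hx0 : (0 : ℝ) < x := by rw [hx]; nlinarith
  set ε : ℝ := x ^ (-(1 / 2) : ℝ) with hε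
  have hε0 : 0 < ε := Real.rpow_pos_of_pos hx0 _
  have hεsq : ε ^ 2 = 1 / x := by
    rw [hε, ← Real.rpow_natCast (x ^ (-(1/2):ℝ)) 2, ← Real.rpow_mul hx0.le]
    norm_num [Real.rpow_neg_one]
  have hε1 : ε ≤ 1 := by
    apply Real.rpow_le_one_of_one_le_of_nonpos
    · rw [hx]; nlinarith
    · norm_num
  have hεp : ε ^ p ≤ ε ^ 2 := by
    calc ε ^ p ≤ ε ^ (2 : ℝ) :=
          Real.rpow_le_rpow_of_exponent_ge hε0 hε1 hp2.le
      _ = ε ^ 2 := by rw [← Real.rpow_natCast ε 2]; norm_num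
  have ht1 : t₁ = ε * t₀ := ht₁
  have ht1nn : 0 ≤ t₁ := by rw [ht1]; positivity
  have ht1p : t₁ ^ p = ε ^ p * t₀ ^ p := by
    rw [ht1, Real.mul_rpow hε0.le ht0pos.le]
  rw [hΦ t₀ ht0pos.le, hΨ t₁ ht1nn, key1, ht1p, ht1]
  have hbound : A * (ε ^ p * t₀ ^ p) ≤ ε ^ 2 * (t₀ ^ 2 * (1 / (2 * p))) := by
    have h1 : A * (ε ^ p * t₀ ^ p) = ε ^ p * (A * t₀ ^ p) := by ring
    rw [h1, key1]
    have h2 : 0 ≤ t₀ ^ 2 * (1 / (2 * p)) := by positivity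
    exact mul_le_mul_of_nonneg_right hεp h2
  have hmain : 3 * (ε * t₀) ^ 2 / 4 + ε ^ 2 * (t₀ ^ 2 * (1 / (2 * p))) <
      1 / 2 * (t₀ ^ 2 / 4 - t₀ ^ 2 * (1 / (2 * p))) := by
    rw [hinv2p, mul_pow, hεsq]
    have ht0sq0 : 0 < t₀ ^ 2 := by positivity
    have hn0 : (0 : ℝ) < n := by linarith
    have hn1 : (0 : ℝ) < n - 1 := by linarith
    have key : 3 / (4 * x) + (n - 2) / (4 * n * x) < 1 / (4 * n) := by
      have e : 3 / (4 * x) + (n - 2) / (4 * n * x) = (4 * n - 2) / (4 * n * x) := by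
        field_simp; ring
      have hx4 : 4 * n - 2 < x := by rw [hx]; linarith
      rw [e, div_lt_div_iff₀ (by positivity) (by positivity)]
      have h := mul_lt_mul_of_pos_right hx4 (show (0:ℝ) < 4 * n by positivity)
      nlinarith [h]
    have e1 : 3 * (1 / x * t₀ ^ 2) / 4 + 1 / x * (t₀ ^ 2 * ((n - 2) / (4 * n)))
        = t₀ ^ 2 * (3 / (4 * x) + (n - 2) / (4 * n * x)) := by
      field_simp
    have e2 : 1 / 2 * (t₀ ^ 2 / 4 - t₀ ^ 2 * ((n - 2) / (4 * n)))
        = t₀ ^ 2 * (1 / (4 * n)) := by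
      field_simp; ring
    rw [e1, e2]
    exact mul_lt_mul_of_pos_left key ht0sq0
  calc 3 * (ε * t₀) ^ 2 / 4 + A * (ε ^ p * t₀ ^ p)
      ≤ 3 * (ε * t₀) ^ 2 / 4 + ε ^ 2 * (t₀ ^ 2 * (1 / (2 * p))) := by linarith
    _ < 1 / 2 * (t₀ ^ 2 / 4 - t₀ ^ 2 * (1 / (2 * p))) := hmain
end

section
/- Let f : ℝ → ℝ be continuous, let μ > 2, and define F(u) = ∫₀ᵘ f(t) dt. Assume that u·f(u) ≥ μ·F(u) ≥ 0 for all u ∈ ℝ. Then for every u ∈ ℝ and every t ≥ 1, F(t·u) ≥ t^μ · F(u). -/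
theorem AR_condition_superlinear_growth (f : ℝ → ℝ) (hf : Continuous f) (μ : ℝ) (hμ : 2 < μ)
    (F : ℝ → ℝ) (hF : ∀ u : ℝ, F u = ∫ t in (0 : ℝ)..u, f t)
    (hAR : ∀ u : ℝ, u * f u ≥ μ * F u ∧ μ * F u ≥ 0) :
    ∀ u : ℝ, ∀ t : ℝ, 1 ≤ t → F (t * u) ≥ t ^ μ * F u := by
  -- F has derivative f everywhere
  have hFd : ∀ s : ℝ, HasDerivAt F (f s) s := by
    intro s
    have : HasDerivAt (fun x => ∫ t in (0:ℝ)..x, f t) (f s) s :=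
      intervalIntegral.integral_hasDerivAt_right (hf.intervalIntegrable 0 s)
        (hf.stronglyMeasurableAtFilter _ _) hf.continuousAt
    exact this.congr_of_eventuallyEq (Filter.Eventually.of_forall fun x => hF x)
  intro u t ht
  have ht0 : (0:ℝ) < t := lt_of_lt_of_le one_pos ht
  set φ : ℝ → ℝ := fun s => F (s * u) * s ^ (-μ) with hφ
  have hφd : ∀ s : ℝ, 0 < s →
      HasDerivAt φ (s ^ (-μ - 1) * ((s * u) * f (s * u) - μ * F (s * u))) s := by
    intro s hs
    have h1 : HasDerivAt (fun x : ℝ => F (x * u)) (f (s * u) * u) s := by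
      have := (hFd (s * u)).comp s ((hasDerivAt_id s).mul_const u)
      simp only [id, one_mul] at this
      exact this
    have h2 : HasDerivAt (fun x : ℝ => x ^ (-μ)) (-μ * s ^ (-μ - 1)) s :=
      Real.hasDerivAt_rpow_const (Or.inl (ne_of_gt hs))
    have : HasDerivAt φ (f (s * u) * u * s ^ (-μ) + F (s * u) * (-μ * s ^ (-μ - 1))) s :=
      h1.mul h2
    convert this using 1
    have hst : s ^ (-μ - 1) * s = s ^ (-μ) := by
      rw [← Real.rpow_add_one (ne_of_gt hs)]
      ring_nf
    linear_combination (u * f (s * u)) * hst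
  have hderiv_nonneg : ∀ s ∈ interior (Set.Ici (1:ℝ)), 0 ≤ deriv φ s := by
    intro s hs
    rw [interior_Ici] at hs
    have hs0 : (0:ℝ) < s := lt_trans one_pos hs
    rw [(hφd s hs0).deriv]
    have h1 : 0 ≤ s ^ (-μ - 1) := Real.rpow_nonneg (le_of_lt hs0) _
    have h2 : (s * u) * f (s * u) - μ * F (s * u) ≥ 0 :=
      sub_nonneg.mpr (hAR (s * u)).1
    exact mul_nonneg h1 h2
  have hcont : ContinuousOn φ (Set.Ici (1:ℝ)) := by
    intro s hs
    exact ((hφd s (lt_of_lt_of_le one_pos hs)).continuousAt).continuousWithinAt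
  have hdiff : DifferentiableOn ℝ φ (interior (Set.Ici (1:ℝ))) := by
    intro s hs
    rw [interior_Ici] at hs
    exact ((hφd s (lt_trans one_pos hs)).differentiableAt).differentiableWithinAt
  have hmono : MonotoneOn φ (Set.Ici (1:ℝ)) :=
    monotoneOn_of_deriv_nonneg (convex_Ici 1) hcont hdiff hderiv_nonneg
  have key : φ 1 ≤ φ t := hmono (Set.self_mem_Ici) ht ht
  have h1 : φ 1 = F u := by simp [hφ]
  have htm : t ^ (-μ) = (t ^ μ)⁻¹ := by
    rw [Real.rpow_neg (le_of_lt ht0)]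
  have htpos : (0:ℝ) < t ^ μ := Real.rpow_pos_of_pos ht0 μ
  rw [h1] at key
  have : F u * t ^ μ ≤ F (t * u) := by
    calc F u * t ^ μ ≤ F (t * u) * t ^ (-μ) * t ^ μ :=
          mul_le_mul_of_nonneg_right key htpos.le
      _ = F (t * u) := by rw [htm]; field_simp
  linarith
end

section
/- Let μ > 2 and c ∈ ℝ, and let (tₙ), (Fₙ), (Gₙ), (fₙ), (gₙ) be real sequences with tₙ ≥ 0, Fₙ ≥ 0, Gₙ ≤ 0, fₙ ≥ μ·Fₙ, and gₙ ≥ Gₙ for all n. Assume that (1/2)tₙ² - Fₙ - (1/2)Gₙ → c as n → ∞, and that (tₙ² - fₙ - gₙ)/(1 + tₙ) → 0 as n → ∞. Then the sequence (tₙ) is bounded. -/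
open Filter

theorem PS_sequence_bounded (μ c : ℝ) (hμ : 2 < μ)
    (t F G f g : ℕ → ℝ)
    (ht : ∀ n, 0 ≤ t n) (hF : ∀ n, 0 ≤ F n) (hG : ∀ n, G n ≤ 0)
    (hf : ∀ n, f n ≥ μ * F n) (hg : ∀ n, g n ≥ G n)
    (hJ : Tendsto (fun n => (1 / 2) * (t n) ^ 2 - F n - (1 / 2) * G n) atTop (nhds c))
    (hJ' : Tendsto (fun n => ((t n) ^ 2 - f n - g n) / (1 + t n)) atTop (nhds 0)) :
    ∃ M : ℝ, ∀ n, t n ≤ M := by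
  -- bound the two convergent sequences
  obtain ⟨B, hB⟩ := hJ.norm.bddAbove_range
  obtain ⟨C, hC⟩ := hJ'.norm.bddAbove_range
  have hB' : ∀ n, (1 / 2) * (t n) ^ 2 - F n - (1 / 2) * G n ≤ B := by
    intro n
    have := hB ⟨n, rfl⟩
    simp only [Real.norm_eq_abs] at this
    exact (le_abs_self _).trans this
  have hC' : ∀ n, (t n) ^ 2 - f n - g n ≥ -C * (1 + t n) := by
    intro n
    have h1 : 0 < 1 + t n := by linarith [ht n]
    have h2 : |((t n) ^ 2 - f n - g n) / (1 + t n)| ≤ C := by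
      have := hC ⟨n, rfl⟩
      simpa only [Real.norm_eq_abs] using this
    have h3 : -C ≤ ((t n) ^ 2 - f n - g n) / (1 + t n) := neg_le_of_abs_le h2
    have h4 := mul_le_mul_of_nonneg_right h3 h1.le
    rwa [div_mul_cancel₀ _ h1.ne'] at h4
  set k : ℝ := μ / 2 - 1 with hk
  have hk0 : 0 < k := by simp only [hk]; linarith
  have key : ∀ n, k * (t n) ^ 2 ≤ μ * B + C * (1 + t n) := by
    intro n
    have h1 := hB' n
    have h2 := hC' n
    have h3 := hf n
    have h4 := hg n
    have h5 := hG n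
    have hF' := hF n
    simp only [hk]
    nlinarith [mul_le_mul_of_nonneg_left h1 (by linarith : (0:ℝ) ≤ μ),
      mul_nonneg (by linarith : (0:ℝ) ≤ μ / 2 - 1) (by linarith : (0:ℝ) ≤ -G n)]
  have hC0 : 0 ≤ C := le_trans (norm_nonneg _) (hC ⟨0, rfl⟩)
  refine ⟨max 1 ((C + max (μ * B + C) 0) / k), fun n => ?_⟩
  by_cases h : t n ≤ 1
  · exact h.trans (le_max_left _ _)
  · push_neg at h
    have hmax := le_max_left (μ * B + C) 0
    have hmax0 := le_max_right (μ * B + C) 0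
    have h2 : k * (t n) ^ 2 ≤ (max (μ * B + C) 0 + C) * t n := by
      nlinarith [key n]
    have h3 : k * t n ≤ max (μ * B + C) 0 + C := by
      have htn : 0 < t n := lt_trans one_pos h
      nlinarith
    have : t n ≤ (C + max (μ * B + C) 0) / k := by
      rw [le_div_iff₀ hk0]; nlinarith
    exact this.trans (le_max_right _ _)
end

section
/- Let (Ω, μ) be a finite measure space and ε > 0. Let g : Ω × (0,∞) → ℝ be jointly measurable, nonnegative, continuous in the second variable, and antitone (nonincreasing) in the second variable, with x ↦ g(x, ε) essentially bounded on Ω. Let G : Ω × (0,∞) → ℝ be such that for each x ∈ Ω the map s ↦ G(x,s) is differentiable on (0,∞) with derivative g(x,s), and such that x ↦ G(x, ε) is integrable. Let u, v ∈ L²(μ). Then the function t ↦ ∫_Ω G(x, ε + (u(x) + t·v(x))²) dμ is well defined for all t ∈ ℝ and is differentiable at t = 0 with derivative 2·∫_Ω g(x, ε + u(x)²)·u(x)·v(x) dμ. -/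
open MeasureTheory Filter

private lemma ftc_aux {ε s : ℝ} (hε : 0 < ε) (hs : ε ≤ s) {G g : ℝ → ℝ}
    (hG : ∀ t : ℝ, 0 < t → HasDerivAt G (g t) t) (hgc : ContinuousOn g (Set.Ioi 0)) :
    G s = G ε + ∫ τ in ε..s, g τ := by
  have hsub : Set.uIcc ε s ⊆ Set.Ioi 0 := by
    rw [Set.uIcc_of_le hs]
    intro t ht
    exact lt_of_lt_of_le hε ht.1
  have hint : IntervalIntegrable g MeasureTheory.volume ε s :=
    (hgc.mono hsub).intervalIntegrable
  have h := intervalIntegral.integral_eq_sub_of_hasDerivAt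
    (fun t ht => hG t (hsub ht)) hint
  linarith [h]

private lemma int_bound_aux {ε s : ℝ} (hε : 0 < ε) (hs : ε ≤ s) {g : ℝ → ℝ}
    (hgc : ContinuousOn g (Set.Ioi 0)) (hnn : ∀ t : ℝ, 0 < t → 0 ≤ g t)
    (hanti : AntitoneOn g (Set.Ioi 0)) :
    0 ≤ (∫ τ in ε..s, g τ) ∧ (∫ τ in ε..s, g τ) ≤ g ε * (s - ε) := by
  have hsub : Set.uIcc ε s ⊆ Set.Ioi 0 := by
    rw [Set.uIcc_of_le hs]
    intro t ht
    exact lt_of_lt_of_le hε ht.1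
  have hint : IntervalIntegrable g MeasureTheory.volume ε s :=
    (hgc.mono hsub).intervalIntegrable
  constructor
  · exact intervalIntegral.integral_nonneg hs
      (fun t ht => hnn t (lt_of_lt_of_le hε ht.1))
  · have hmono := intervalIntegral.integral_mono_on (f := g) (g := fun _ => g ε)
      hs hint (intervalIntegrable_const)
      (fun t ht => hanti (Set.mem_Ioi.2 hε) (Set.mem_Ioi.2 (lt_of_lt_of_le hε ht.1)) ht.1)
    simpa [mul_comm] using hmono

private lemma meas_aux {Ω : Type*} [MeasurableSpace Ω] {ε : ℝ} {g : Ω → ℝ → ℝ}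
    (hg : Measurable (Function.uncurry g)) {h : Ω → ℝ} (hh : Measurable h)
    (hh' : ∀ x, ε ≤ h x) :
    Measurable (fun x => ∫ τ in ε..h x, g x τ) := by
  have key : ∀ x, (∫ τ in ε..h x, g x τ)
      = ∫ τ, ({p : Ω × ℝ | p.2 ∈ Set.Ioc ε (h p.1)}).indicator (Function.uncurry g) (x, τ) := by
    intro x
    rw [intervalIntegral.integral_of_le (hh' x),
      ← MeasureTheory.integral_indicator measurableSet_Ioc]
    rfl
  simp_rw [key]
  have hs : MeasurableSet {p : Ω × ℝ | p.2 ∈ Set.Ioc ε (h p.1)} := by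
    apply MeasurableSet.inter
    · exact measurableSet_lt measurable_const measurable_snd
    · exact measurableSet_le measurable_snd (hh.comp measurable_fst)
  have hf : StronglyMeasurable
      (fun p : Ω × ℝ => ({p : Ω × ℝ | p.2 ∈ Set.Ioc ε (h p.1)}).indicator
        (Function.uncurry g) p) :=
    (hg.indicator hs).stronglyMeasurable
  exact hf.integral_prod_right'.measurable

theorem singular_energy_differentiable
    {Ω : Type*} [MeasurableSpace Ω] (μ : Measure Ω) [IsFiniteMeasure μ]
    (ε : ℝ) (hε : 0 < ε)
    (g : Ω → ℝ → ℝ) (hgmeas : Measurable (Function.uncurry g))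
    (hgnonneg : ∀ x : Ω, ∀ s : ℝ, 0 < s → 0 ≤ g x s)
    (hgcont : ∀ x : Ω, ContinuousOn (g x) (Set.Ioi 0))
    (hganti : ∀ x : Ω, AntitoneOn (g x) (Set.Ioi 0))
    (hgbdd : ∃ B : ℝ, ∀ᵐ x ∂μ, |g x ε| ≤ B)
    (G : Ω → ℝ → ℝ)
    (hG : ∀ x : Ω, ∀ s : ℝ, 0 < s → HasDerivAt (G x) (g x s) s)
    (hGint : Integrable (fun x => G x ε) μ)
    (u v : Ω → ℝ) (hu : MemLp u 2 μ) (hv : MemLp v 2 μ) :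
    (∀ t : ℝ, Integrable (fun x => G x (ε + (u x + t * v x) ^ 2)) μ) ∧
      HasDerivAt (fun t : ℝ => ∫ x, G x (ε + (u x + t * v x) ^ 2) ∂μ)
        (2 * ∫ x, g x (ε + (u x) ^ 2) * u x * v x ∂μ) 0 := by
  obtain ⟨B₀, hB₀⟩ := hgbdd
  set B : ℝ := max B₀ 0 with hBdef
  have hBnn : 0 ≤ B := le_max_right _ _
  have hB : ∀ᵐ x ∂μ, g x ε ≤ B := by
    filter_upwards [hB₀] with x hx
    exact le_trans (le_trans (le_abs_self _) hx) (le_max_left _ _)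
  have hu₀ : u =ᵐ[μ] hu.1.mk u := hu.1.ae_eq_mk
  have hv₀ : v =ᵐ[μ] hv.1.mk v := hv.1.ae_eq_mk
  set u₀ : Ω → ℝ := hu.1.mk u with hu₀def
  set v₀ : Ω → ℝ := hv.1.mk v with hv₀def
  have hu₀m : Measurable u₀ := hu.1.stronglyMeasurable_mk.measurable
  have hv₀m : Measurable v₀ := hv.1.stronglyMeasurable_mk.measurable
  have hle : ∀ a : ℝ, ε ≤ ε + a ^ 2 := fun a => le_add_of_nonneg_right (sq_nonneg a)
  have hpos : ∀ a : ℝ, 0 < ε + a ^ 2 := fun a => lt_of_lt_of_le hε (hle a)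
  have key : ∀ x : Ω, ∀ s : ℝ, ε ≤ s → G x s = G x ε + ∫ τ in ε..s, g x τ :=
    fun x s hs => ftc_aux hε hs (fun t ht => hG x t ht) (hgcont x)
  -- ae strong measurability of F t
  have hAESM : ∀ t : ℝ,
      AEStronglyMeasurable (fun x => G x (ε + (u x + t * v x) ^ 2)) μ := by
    intro t
    have hmw : Measurable (fun x => ε + (u₀ x + t * v₀ x) ^ 2) :=
      (measurable_const.add (((hu₀m.add (hv₀m.const_mul t)).pow_const 2)))
    have h1 : Measurable (fun x => ∫ τ in ε..(ε + (u₀ x + t * v₀ x) ^ 2), g x τ) :=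
      meas_aux hgmeas hmw (fun x => hle _)
    have h2 : AEStronglyMeasurable
        (fun x => G x ε + ∫ τ in ε..(ε + (u₀ x + t * v₀ x) ^ 2), g x τ) μ :=
      hGint.1.add h1.aestronglyMeasurable
    apply h2.congr
    filter_upwards [hu₀, hv₀] with x hx1 hx2
    rw [key x _ (hle (u x + t * v x)), hx1, hx2]
  -- integrability of F t for each t
  have hIntF : ∀ t : ℝ, Integrable (fun x => G x (ε + (u x + t * v x) ^ 2)) μ := by
    intro t
    have hD : Integrable
        (fun x => |G x ε| + B * (2 * u x ^ 2 + 2 * t ^ 2 * v x ^ 2)) μ := by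
      apply hGint.abs.add
      exact (((hu.integrable_sq.const_mul 2).add
        (hv.integrable_sq.const_mul (2 * t ^ 2))).const_mul B)
    apply Integrable.mono' hD (hAESM t)
    filter_upwards [hB] with x hgB
    have hs := hle (u x + t * v x)
    rw [key x _ hs]
    obtain ⟨hb1, hb2⟩ := int_bound_aux hε hs (hgcont x)
      (fun s hs0 => hgnonneg x s hs0) (hganti x)
    have hgnn : 0 ≤ g x ε := hgnonneg x ε hε
    have hsq : (u x + t * v x) ^ 2 ≤ 2 * u x ^ 2 + 2 * t ^ 2 * v x ^ 2 := by
      nlinarith [sq_nonneg (u x - t * v x)]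
    have h1 : g x ε * (ε + (u x + t * v x) ^ 2 - ε)
        ≤ B * (2 * u x ^ 2 + 2 * t ^ 2 * v x ^ 2) := by
      have : ε + (u x + t * v x) ^ 2 - ε = (u x + t * v x) ^ 2 := by ring
      rw [this]
      exact mul_le_mul hgB hsq (sq_nonneg _) hBnn
    rw [Real.norm_eq_abs]
    calc |G x ε + ∫ τ in ε..(ε + (u x + t * v x) ^ 2), g x τ|
        ≤ |G x ε| + |∫ τ in ε..(ε + (u x + t * v x) ^ 2), g x τ| := abs_add_le _ _
      _ ≤ |G x ε| + B * (2 * u x ^ 2 + 2 * t ^ 2 * v x ^ 2) := by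
          rw [abs_of_nonneg hb1]
          linarith
  -- pointwise derivative
  have hderiv : ∀ x : Ω, ∀ t : ℝ,
      HasDerivAt (fun t : ℝ => G x (ε + (u x + t * v x) ^ 2))
        (g x (ε + (u x + t * v x) ^ 2) * (2 * (u x + t * v x) * v x)) t := by
    intro x t
    have h1 : HasDerivAt (fun t : ℝ => u x + t * v x) (v x) t := by
      simpa using ((hasDerivAt_id t).mul_const (v x)).const_add (u x)
    have h2 : HasDerivAt (fun t : ℝ => ε + (u x + t * v x) ^ 2)
        (2 * (u x + t * v x) * v x) t := by
      have := (h1.pow 2).const_add ε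
      simpa using this
    have h3 := (hG x _ (hpos (u x + t * v x))).comp t h2
    exact h3
  -- measurability of F' 0
  have hF'meas : ∀ t : ℝ, AEStronglyMeasurable
      (fun x => g x (ε + (u x + t * v x) ^ 2) * (2 * (u x + t * v x) * v x)) μ := by
    intro t
    have hmw : Measurable (fun x => ε + (u₀ x + t * v₀ x) ^ 2) :=
      (measurable_const.add (((hu₀m.add (hv₀m.const_mul t)).pow_const 2)))
    have h1 : Measurable
        (fun x => g x (ε + (u₀ x + t * v₀ x) ^ 2) * (2 * (u₀ x + t * v₀ x) * v₀ x)) := by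
      apply Measurable.mul
      · exact hgmeas.comp (measurable_id.prodMk hmw)
      · exact ((hu₀m.add (hv₀m.const_mul t)).const_mul 2).mul hv₀m
    apply h1.aestronglyMeasurable.congr
    filter_upwards [hu₀, hv₀] with x hx1 hx2
    rw [hx1, hx2]
  -- bound for the derivative
  have h_bound : ∀ᵐ x ∂μ, ∀ t ∈ Metric.ball (0 : ℝ) 1,
      ‖g x (ε + (u x + t * v x) ^ 2) * (2 * (u x + t * v x) * v x)‖
        ≤ B * (u x ^ 2 + 3 * v x ^ 2) := by
    filter_upwards [hB] with x hgB t ht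
    have htlt : |t| < 1 := by
      simpa [Real.dist_eq] using Metric.mem_ball.1 ht
    have hs := hle (u x + t * v x)
    have hgnn : 0 ≤ g x (ε + (u x + t * v x) ^ 2) :=
      hgnonneg x _ (hpos (u x + t * v x))
    have hg_le : g x (ε + (u x + t * v x) ^ 2) ≤ B :=
      le_trans (hganti x (Set.mem_Ioi.2 hε) (Set.mem_Ioi.2 (hpos _)) hs) hgB
    have habs : |2 * (u x + t * v x) * v x| ≤ u x ^ 2 + 3 * v x ^ 2 := by
      have h1 : |2 * (u x + t * v x) * v x| = 2 * |u x + t * v x| * |v x| := by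
        rw [abs_mul, abs_mul]
        simp [abs_of_nonneg, mul_assoc]
      have h2 : |u x + t * v x| ≤ |u x| + |v x| := by
        calc |u x + t * v x| ≤ |u x| + |t * v x| := abs_add_le _ _
          _ = |u x| + |t| * |v x| := by rw [abs_mul]
          _ ≤ |u x| + 1 * |v x| := by
              have := abs_nonneg (v x)
              nlinarith
          _ = |u x| + |v x| := by ring
      have h3 : 2 * (|u x| + |v x|) * |v x| ≤ u x ^ 2 + 3 * v x ^ 2 := by
        nlinarith [sq_nonneg (|u x| - |v x|), sq_abs (u x), sq_abs (v x),
          abs_nonneg (u x), abs_nonneg (v x)]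
      calc |2 * (u x + t * v x) * v x| = 2 * |u x + t * v x| * |v x| := h1
        _ ≤ 2 * (|u x| + |v x|) * |v x| := by
            have := abs_nonneg (v x)
            nlinarith
        _ ≤ u x ^ 2 + 3 * v x ^ 2 := h3
    rw [Real.norm_eq_abs, abs_mul, abs_of_nonneg hgnn]
    exact mul_le_mul hg_le habs (abs_nonneg _) hBnn
  have hboundInt : Integrable (fun x => B * (u x ^ 2 + 3 * v x ^ 2)) μ :=
    ((hu.integrable_sq.add (hv.integrable_sq.const_mul 3)).const_mul B)
  obtain ⟨-, hmain⟩ := hasDerivAt_integral_of_dominated_loc_of_deriv_le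
    (F := fun t x => G x (ε + (u x + t * v x) ^ 2))
    (F' := fun t x => g x (ε + (u x + t * v x) ^ 2) * (2 * (u x + t * v x) * v x))
    (x₀ := (0 : ℝ)) (bound := fun x => B * (u x ^ 2 + 3 * v x ^ 2))
    (Metric.ball_mem_nhds 0 one_pos) (Eventually.of_forall hAESM) (hIntF 0) (hF'meas 0) h_bound hboundInt
    (Eventually.of_forall fun x t ht => hderiv x t)
  refine ⟨hIntF, ?_⟩
  convert hmain using 1
  case e'_4 => rfl
  case e'_5 => rfl
  have heq : (fun x => g x (ε + (u x + 0 * v x) ^ 2) * (2 * (u x + 0 * v x) * v x))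
      = fun x => 2 * (g x (ε + u x ^ 2) * u x * v x) := by
    funext x
    rw [zero_mul, add_zero]
    ring
  rw [heq, MeasureTheory.integral_const_mul]
end
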